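/- For 2 ≤ i ≤ n−1 and 1 ≤ j ≤ n−1, the element σ_j·x is a least common right-multiple of σ_j and σ_{i−1}σ_i in B_n^+, where: x = (σ_{i−1}σ_i)(σ_{i−2}σ_{i−1}) if j = i−2; x = σ_i if j = i−1; x = σ_{i−1}σ_iσ_{i+1} if j = i+1; and x = σ_{i−1}σ_i in all other cases. -/

import Mathlib

/-!
Common setup: the positive braid monoid `B_n^+` on `n` strands, presented by the
Artin generators `σ_1, …, σ_{n-1}` (1-based indexing) with the braid relations;
lex-representatives, forbidden prefixes, admissible functions, etc.
-/

namespace BraidPaper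

/-- Words in the Artin generators: the free monoid on `n - 1` letters. -/
abbrev Word (n : ℕ) := FreeMonoid (Fin (n - 1))

/-- The generator `σ_i` (`1 ≤ i ≤ n - 1`, 1-based) as a one-letter word;
the empty word for out-of-range indices. -/
def sigma (n : ℕ) (i : ℕ) : Word n :=
  if h : 1 ≤ i ∧ i ≤ n - 1 then FreeMonoid.of (⟨i - 1, by omega⟩ : Fin (n - 1)) else 1

/-- The braid relations. -/
inductive BraidRel (n : ℕ) : Word n → Word n → Prop
  | comm : ∀ i j : ℕ, 1 ≤ i → i ≤ n - 1 → 1 ≤ j → j ≤ n - 1 → (i + 2 ≤ j ∨ j + 2 ≤ i) →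
      BraidRel n (sigma n i * sigma n j) (sigma n j * sigma n i)
  | braid : ∀ i : ℕ, 1 ≤ i → i + 1 ≤ n - 1 →
      BraidRel n (sigma n i * sigma n (i + 1) * sigma n i)
        (sigma n (i + 1) * sigma n i * sigma n (i + 1))

/-- The congruence generated by the braid relations. -/
def braidCon (n : ℕ) : Con (Word n) := conGen (BraidRel n)

/-- The positive braid monoid `B_n^+`. -/
abbrev PB (n : ℕ) := (braidCon n).Quotient

/-- The canonical projection `b : A_n^* → B_n^+`. -/
def pr (n : ℕ) : Word n →* PB n := (braidCon n).mk'

/-- The length homomorphism on words (with values in `Multiplicative ℕ`). -/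
def lenHom (n : ℕ) : Word n →* Multiplicative ℕ :=
  FreeMonoid.lift fun _ => Multiplicative.ofAdd 1

lemma lenHom_sigma (n t : ℕ) (h1 : 1 ≤ t) (h2 : t ≤ n - 1) :
    lenHom n (sigma n t) = Multiplicative.ofAdd 1 := by
  rw [sigma, dif_pos ⟨h1, h2⟩]
  exact FreeMonoid.lift_eval_of _ _

lemma braidCon_le_ker (n : ℕ) : braidCon n ≤ Con.ker (lenHom n) := by
  refine Con.conGen_le.mpr ?_
  intro x y h
  rw [Con.ker_rel]
  cases h with
  | comm i j hi hi' hj hj' hij =>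
      rw [map_mul, map_mul, mul_comm]
  | braid i hi hi' =>
      rw [map_mul, map_mul, map_mul, map_mul,
        lenHom_sigma n i hi (by omega), lenHom_sigma n (i + 1) (by omega) hi']

/-- The (well-defined) length of a positive braid. -/
def len (n : ℕ) (x : PB n) : ℕ :=
  Multiplicative.toAdd (Con.lift _ (lenHom n) (braidCon_le_ker n) x)

/-- The length of a word. -/
def wlen {n : ℕ} (w : Word n) : ℕ := (FreeMonoid.toList w).length

/-- Strict lexicographic order on words, induced by `σ_1 < σ_2 < ⋯ < σ_{n-1}`. -/
def lexLt {n : ℕ} (u v : Word n) : Prop :=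
  List.Lex (· < ·) (FreeMonoid.toList u) (FreeMonoid.toList v)

/-- `L_n`: the set of lex-representatives, i.e. words that are `≤_lex`-minimal among
all words representing the same element of `B_n^+` (all of which have equal length). -/
def Ln (n : ℕ) : Set (Word n) :=
  {w | ∀ v : Word n, pr n v = pr n w → ¬ lexLt v w}

open Classical in
/-- `ω(β)`: the lex-representative of a positive braid `β`. -/
noncomputable def omegaRep (n : ℕ) (β : PB n) : Word n :=
  if h : ∃ w : Word n, pr n w = β ∧ w ∈ Ln n then h.choose else 1

/-- `F_n(w)`: the set of forbidden prefixes after `w`. -/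
def Fset (n : ℕ) (w : Word n) : Set (PB n) :=
  {α | w * omegaRep n α ∉ Ln n}

/-- Left-divisibility `a ≼ b` in `B_n^+`. -/
def ldvd (n : ℕ) (a b : PB n) : Prop := ∃ c : PB n, a * c = b

/-- The set of `≼`-minimal elements of a subset of `B_n^+`. -/
def minimals (n : ℕ) (S : Set (PB n)) : Set (PB n) :=
  {a | a ∈ S ∧ ∀ b ∈ S, ldvd n b a → b = a}

/-- `F_n^min(w)`: the set of minimal forbidden prefixes after `w`. -/
def Fmin (n : ℕ) (w : Word n) : Set (PB n) := minimals n (Fset n w)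

/-- `d` is a least common right-multiple of the set `S`. -/
def IsLcm (n : ℕ) (S : Set (PB n)) (d : PB n) : Prop :=
  (∀ a ∈ S, ldvd n a d) ∧ ∀ e : PB n, (∀ a ∈ S, ldvd n a e) → ldvd n d e

/-- The descending product `σ_a σ_{a-1} ⋯ σ_b` (empty if `b > a`). -/
def prodDesc (n a b : ℕ) : Word n :=
  (((List.range' b (a + 1 - b)).reverse).map (sigma n)).prod

/-- The ascending product `σ_a σ_{a+1} ⋯ σ_b` (empty if `a > b`). -/
def prodAsc (n a b : ℕ) : Word n :=
  ((List.range' a (b + 1 - a)).map (sigma n)).prod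

/-- Admissible functions `f : {1,…,n-1} → {-1,0,1,…,n-1}`. -/
def Admissible (n : ℕ) (f : ℕ → ℤ) : Prop :=
  (∀ i : ℕ, 1 ≤ i → i ≤ n - 1 → -1 ≤ f i ∧ f i ≤ (i : ℤ)) ∧ f 1 ≠ -1

/-- The set `F_f ⊆ B_n^+` associated to an admissible function `f`: the elements
`σ_i σ_{i-1} ⋯ σ_{f(i)}` for `i` with `1 ≤ f(i) ≤ i`, together with the elements
`σ_{i-1} σ_i` for `i` with `f(i) = -1`. -/
def Ff (n : ℕ) (f : ℕ → ℤ) : Set (PB n) :=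
  {x | ∃ i : ℕ, 1 ≤ i ∧ i ≤ n - 1 ∧ 1 ≤ f i ∧ f i ≤ (i : ℤ) ∧
        x = pr n (prodDesc n i (f i).toNat)} ∪
  {x | ∃ i : ℕ, 1 ≤ i ∧ i ≤ n - 1 ∧ f i = -1 ∧ x = pr n (sigma n (i - 1) * sigma n i)}

/-- `F_n^min(w, m)`: the set of `≼`-minimal elements of `{σ_1,…,σ_m} ∪ F_n^min(w)`. -/
def FminM (n : ℕ) (w : Word n) (m : ℕ) : Set (PB n) :=
  minimals n ({x | ∃ i : ℕ, 1 ≤ i ∧ i ≤ m ∧ x = pr n (sigma n i)} ∪ Fmin n w)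

/-- `x_{n,j}` (for `j : ℤ`): the number of elements of `B_n^+` of length `j`
(`0` for negative `j`). -/
noncomputable def xcount (n : ℕ) (j : ℤ) : ℕ :=
  Nat.card {x : PB n // (len n x : ℤ) = j}

/-- `x_{n,k}(w,m)`: the number of words in `L_n` of length `k` of the form `w·w'`,
where `w'` does not begin with any of `σ_1, …, σ_m`. -/
noncomputable def xwm (n k : ℕ) (w : Word n) (m : ℕ) : ℕ :=
  Nat.card {v : Word n // wlen v = k ∧ v ∈ Ln n ∧
    ∃ w' : Word n, v = w * w' ∧
      ∀ i : ℕ, 1 ≤ i → i ≤ m → ¬ ∃ u : Word n, w' = sigma n i * u}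


/-! ### Infrastructure for Garside-style reasoning -/

/-- Valid generator index (1-based). -/
def Vld (n a : ℕ) : Prop := 1 ≤ a ∧ a ≤ n - 1

/-- Image of a generator in `B_n^+`. -/
def sq (n a : ℕ) : PB n := pr n (sigma n a)

/-- Word associated to a list of 1-based indices. -/
def wordOf (n : ℕ) (l : List ℕ) : Word n := (l.map (sigma n)).prod

/-- Braid associated to a list of 1-based indices. -/
def prW (n : ℕ) (l : List ℕ) : PB n := pr n (wordOf n l)

lemma wordOf_nil (n : ℕ) : wordOf n [] = 1 := rfl

lemma wordOf_cons (n a : ℕ) (l : List ℕ) :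
    wordOf n (a :: l) = sigma n a * wordOf n l := by
  simp [wordOf]

lemma wordOf_append (n : ℕ) (l₁ l₂ : List ℕ) :
    wordOf n (l₁ ++ l₂) = wordOf n l₁ * wordOf n l₂ := by
  simp [wordOf]

lemma prW_nil (n : ℕ) : prW n [] = 1 := rfl

lemma prW_cons (n a : ℕ) (l : List ℕ) :
    prW n (a :: l) = sq n a * prW n l := by
  simp [prW, wordOf_cons, sq, pr, map_mul]

lemma prW_append (n : ℕ) (l₁ l₂ : List ℕ) :
    prW n (l₁ ++ l₂) = prW n l₁ * prW n l₂ := by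
  simp [prW, wordOf_append, pr, map_mul]

lemma pr_eq_iff (n : ℕ) (u v : Word n) : pr n u = pr n v ↔ braidCon n u v := by
  constructor
  · intro h; exact (braidCon n).eq.mp h
  · intro h; exact (braidCon n).eq.mpr h

lemma pr_rel {n : ℕ} {l r : Word n} (h : BraidRel n l r) : pr n l = pr n r :=
  (pr_eq_iff n l r).mpr (ConGen.Rel.of _ _ h)

lemma sq_comm {n a b : ℕ} (ha : Vld n a) (hb : Vld n b) (h : a + 2 ≤ b ∨ b + 2 ≤ a) :
    sq n a * sq n b = sq n b * sq n a := by
  have := pr_rel (BraidRel.comm (n := n) a b ha.1 ha.2 hb.1 hb.2 h)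
  simpa [sq, map_mul] using this

lemma sq_braid {n a b : ℕ} (ha : Vld n a) (hb : Vld n b) (h : a + 1 = b ∨ b + 1 = a) :
    sq n a * sq n b * sq n a = sq n b * sq n a * sq n b := by
  rcases h with h | h
  · have := pr_rel (BraidRel.braid (n := n) a ha.1 (h ▸ hb.2))
    rw [h] at this
    simpa [sq, map_mul] using this
  · have := pr_rel (BraidRel.braid (n := n) b hb.1 (h ▸ ha.2))
    rw [h] at this
    simpa [sq, map_mul] using (this.symm)


/-- One elementary rewriting step. -/
def Step (n : ℕ) (u v : Word n) : Prop :=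
  ∃ p s l r : Word n, (BraidRel n l r ∨ BraidRel n r l) ∧ u = p * l * s ∧ v = p * r * s

lemma Step.symm' {n : ℕ} {u v : Word n} (h : Step n u v) : Step n v u := by
  obtain ⟨p, s, l, r, hrel, hu, hv⟩ := h
  exact ⟨p, s, r, l, hrel.symm, hv, hu⟩

lemma Step.toCon {n : ℕ} {u v : Word n} (h : Step n u v) : braidCon n u v := by
  obtain ⟨p, s, l, r, hrel, hu, hv⟩ := h
  subst hu; subst hv
  have hlr : braidCon n l r := by
    rcases hrel with h | h
    · exact ConGen.Rel.of _ _ h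
    · exact ((braidCon n).symm (ConGen.Rel.of _ _ h))
  exact (braidCon n).mul ((braidCon n).mul ((braidCon n).refl p) hlr) ((braidCon n).refl s)

/-- The congruence given by chains of elementary steps. -/
def chainCon (n : ℕ) : Con (Word n) where
  r := Relation.ReflTransGen (Step n)
  iseqv := ⟨fun _ => Relation.ReflTransGen.refl,
    fun h => by
      induction h with
      | refl => exact Relation.ReflTransGen.refl
      | tail _ hs ih => exact (Relation.ReflTransGen.single hs.symm').trans ih,
    fun h h' => h.trans h'⟩
  mul' := by
    intro w x y z h h'
    have h1 : Relation.ReflTransGen (Step n) (w * y) (x * y) := by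
      refine h.lift (· * y) ?_
      rintro a b ⟨p, s, l, r, hrel, ha, hb⟩
      exact ⟨p, s * y, l, r, hrel, by rw [ha]; simp [mul_assoc],
        by rw [hb]; simp [mul_assoc]⟩
    have h2 : Relation.ReflTransGen (Step n) (x * y) (x * z) := by
      refine h'.lift (x * ·) ?_
      rintro a b ⟨p, s, l, r, hrel, ha, hb⟩
      exact ⟨x * p, s, l, r, hrel, by rw [ha]; simp [mul_assoc],
        by rw [hb]; simp [mul_assoc]⟩
    exact h1.trans h2

lemma braidCon_iff_chain {n : ℕ} {u v : Word n} :
    braidCon n u v ↔ Relation.ReflTransGen (Step n) u v := by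
  constructor
  · intro h
    have hle : braidCon n ≤ chainCon n := by
      apply Con.conGen_le.mpr
      intro x y hxy
      exact Relation.ReflTransGen.single ⟨1, 1, x, y, Or.inl hxy, by simp, by simp⟩
    exact hle h
  · intro h
    induction h with
    | refl => exact (braidCon n).refl u
    | tail _ hstep ih => exact (braidCon n).trans ih hstep.toCon

lemma wlen_mul {n : ℕ} (u v : Word n) : wlen (u * v) = wlen u + wlen v := by
  simp [wlen, FreeMonoid.toList_mul]

lemma wlen_sigma {n a : ℕ} (ha : Vld n a) : wlen (sigma n a) = 1 := by
  rw [sigma, dif_pos ⟨ha.1, ha.2⟩]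
  rfl

lemma wlen_braidCon {n : ℕ} {u v : Word n} (h : braidCon n u v) : wlen u = wlen v := by
  have := braidCon_le_ker n h
  rw [Con.ker_rel] at this
  have hl : ∀ w : Word n, lenHom n w = Multiplicative.ofAdd (wlen w) := by
    intro w
    induction w using FreeMonoid.recOn with
    | one => simp [wlen]
    | of_mul x xs ih =>
        rw [map_mul, ih]
        simp only [wlen, lenHom, FreeMonoid.toList_of_mul, List.length_cons]
        rw [mul_comm]
        rfl
  have h2 := hl u ▸ hl v ▸ this
  simpa using h2

lemma wlen_pr_eq {n : ℕ} {u v : Word n} (h : pr n u = pr n v) : wlen u = wlen v :=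
  wlen_braidCon ((pr_eq_iff n u v).mp h)

/-- head decomposition of a nonempty word -/
lemma head_decomp {n : ℕ} (u : Word n) (h : wlen u ≠ 0) :
    ∃ (a : ℕ) (u' : Word n), Vld n a ∧ u = sigma n a * u' := by
  rcases hl : FreeMonoid.toList u with _ | ⟨c, t⟩
  · exact absurd (by simp [wlen, hl]) h
  · have hc : c.1 < n - 1 := c.2
    refine ⟨c.1 + 1, FreeMonoid.ofList t, ⟨Nat.le_add_left 1 _, by omega⟩, ?_⟩
    have hs : sigma n (c.1 + 1) = FreeMonoid.of c := by
      rw [sigma, dif_pos ⟨Nat.le_add_left 1 _, by omega⟩]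
      have : (⟨c.1 + 1 - 1, by omega⟩ : Fin (n - 1)) = c := by
        apply Fin.ext; simp
      rw [this]
    rw [hs]
    apply FreeMonoid.toList.injective
    simp [hl, FreeMonoid.toList_mul]

lemma head_inj {n : ℕ} {a b : ℕ} {u v : Word n} (ha : Vld n a) (hb : Vld n b)
    (h : sigma n a * u = sigma n b * v) : a = b ∧ u = v := by
  rw [sigma, dif_pos ⟨ha.1, ha.2⟩, sigma, dif_pos ⟨hb.1, hb.2⟩] at h
  have := congrArg FreeMonoid.toList h
  rw [FreeMonoid.toList_mul, FreeMonoid.toList_mul, FreeMonoid.toList_of,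
    FreeMonoid.toList_of] at this
  simp only [List.cons_append, List.nil_append, List.cons.injEq] at this
  obtain ⟨h1, h2⟩ := this
  rw [Fin.mk.injEq] at h1
  have ha1 := ha.1
  have hb1 := hb.1
  constructor
  · omega
  · exact FreeMonoid.toList.injective h2


/-- The right complement of `a` in `b` (lists of 1-based generator indices). -/
def comp (a b : ℕ) : List ℕ :=
  if a = b then [] else if a + 1 = b ∨ b + 1 = a then [b, a] else [b]

lemma comp_self (a : ℕ) : comp a a = [] := by simp [comp]

lemma comp_adj {a b : ℕ} (h : a + 1 = b ∨ b + 1 = a) : comp a b = [b, a] := by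
  have hne : a ≠ b := by omega
  simp [comp, hne, h]

lemma comp_far {a b : ℕ} (h : a + 2 ≤ b ∨ b + 2 ≤ a) : comp a b = [b] := by
  have hne : a ≠ b := by omega
  have hna : ¬ (a + 1 = b ∨ b + 1 = a) := by omega
  simp [comp, hne, hna]

lemma prW_mul_pr (n : ℕ) (l : List ℕ) (z : Word n) :
    prW n l * pr n z = pr n (wordOf n l * z) := by
  simp [prW, pr, map_mul]

lemma prW_swap (n : ℕ) (p s : List ℕ) {a b : ℕ} (ha : Vld n a) (hb : Vld n b)
    (h : a + 2 ≤ b ∨ b + 2 ≤ a) :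
    prW n (p ++ a :: b :: s) = prW n (p ++ b :: a :: s) := by
  have key : prW n (a :: b :: s) = prW n (b :: a :: s) := by
    rw [prW_cons, prW_cons, prW_cons, prW_cons, ← mul_assoc, ← mul_assoc, sq_comm ha hb h]
  rw [show p ++ a :: b :: s = p ++ (a :: b :: s) from rfl,
    show p ++ b :: a :: s = p ++ (b :: a :: s) from rfl, prW_append, prW_append, key]

lemma prW_braid (n : ℕ) (p s : List ℕ) {a b : ℕ} (ha : Vld n a) (hb : Vld n b)
    (h : a + 1 = b ∨ b + 1 = a) :
    prW n (p ++ a :: b :: a :: s) = prW n (p ++ b :: a :: b :: s) := by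
  have key : prW n (a :: b :: a :: s) = prW n (b :: a :: b :: s) := by
    rw [prW_cons, prW_cons, prW_cons, prW_cons, prW_cons, prW_cons,
      ← mul_assoc, ← mul_assoc, ← mul_assoc, ← mul_assoc, sq_braid ha hb h]
  rw [show p ++ a :: b :: a :: s = p ++ (a :: b :: a :: s) from rfl,
    show p ++ b :: a :: b :: s = p ++ (b :: a :: b :: s) from rfl,
    prW_append, prW_append, key]

section Identities

variable {n a b d : ℕ}

/-- far a d, adj a b, adj d b -/
lemma idI1 (ha : Vld n a) (hb : Vld n b) (hd : Vld n d)
    (had : a + 2 ≤ d ∨ d + 2 ≤ a) (hab : a + 1 = b ∨ b + 1 = a)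
    (hdb : d + 1 = b ∨ b + 1 = d) :
    prW n [d, b, a, d, b] = prW n [b, a, d, b, a] := by
  calc prW n [d, b, a, d, b] = prW n [d, b, d, a, b] := prW_swap n [d, b] [b] ha hd had
    _ = prW n [b, d, b, a, b] := prW_braid n [] [a, b] hd hb hdb
    _ = prW n [b, d, a, b, a] := prW_braid n [b, d] [] hb ha (by omega)
    _ = prW n [b, a, d, b, a] := prW_swap n [b] [b, a] hd ha (by omega)

/-- far a d, adj a b, adj d b -/
lemma idI2 (ha : Vld n a) (hb : Vld n b) (hd : Vld n d)
    (had : a + 2 ≤ d ∨ d + 2 ≤ a) (hab : a + 1 = b ∨ b + 1 = a)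
    (hdb : d + 1 = b ∨ b + 1 = d) :
    prW n [d, b, a, b, d] = prW n [a, b, d, b, a] := by
  calc prW n [d, b, a, b, d] = prW n [d, a, b, a, d] := prW_braid n [d] [d] hb ha (by omega)
    _ = prW n [a, d, b, a, d] := prW_swap n [] [b, a, d] hd ha (by omega)
    _ = prW n [a, d, b, d, a] := prW_swap n [a, d, b] [] ha hd had
    _ = prW n [a, b, d, b, a] := prW_braid n [a] [a] hd hb hdb

/-- adj a d, far a b, adj d b -/
lemma idI3 (ha : Vld n a) (hb : Vld n b) (hd : Vld n d)
    (had : a + 1 = d ∨ d + 1 = a) (hab : a + 2 ≤ b ∨ b + 2 ≤ a)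
    (hdb : d + 1 = b ∨ b + 1 = d) :
    prW n [d, a, b, d, a] = prW n [b, d, b, a, d] := by
  calc prW n [d, a, b, d, a] = prW n [d, b, a, d, a] := prW_swap n [d] [d, a] ha hb hab
    _ = prW n [d, b, d, a, d] := prW_braid n [d, b] [] ha hd had
    _ = prW n [b, d, b, a, d] := prW_braid n [] [a, d] hd hb hdb

/-- adj a d, far a b, adj d b -/
lemma idI4 (ha : Vld n a) (hb : Vld n b) (hd : Vld n d)
    (had : a + 1 = d ∨ d + 1 = a) (hab : a + 2 ≤ b ∨ b + 2 ≤ a)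
    (hdb : d + 1 = b ∨ b + 1 = d) :
    prW n [d, b, a, d, b] = prW n [a, d, b, a, d] := by
  calc prW n [d, b, a, d, b] = prW n [d, a, b, d, b] := prW_swap n [d] [d, b] hb ha (by omega)
    _ = prW n [d, a, d, b, d] := prW_braid n [d, a] [] hb hd (by omega)
    _ = prW n [a, d, a, b, d] := prW_braid n [] [b, d] hd ha (by omega)
    _ = prW n [a, d, b, a, d] := prW_swap n [a, d] [d] ha hb hab

/-- adj a d, adj a b, far d b -/
lemma idI5 (ha : Vld n a) (hb : Vld n b) (hd : Vld n d)
    (had : a + 1 = d ∨ d + 1 = a) (hab : a + 1 = b ∨ b + 1 = a)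
    (hdb : d + 2 ≤ b ∨ b + 2 ≤ d) :
    prW n [d, a, b, a, d] = prW n [b, a, d, a, b] := by
  calc prW n [d, a, b, a, d] = prW n [d, b, a, b, d] := prW_braid n [d] [d] ha hb hab
    _ = prW n [b, d, a, b, d] := prW_swap n [] [a, b, d] hd hb (by omega)
    _ = prW n [b, d, a, d, b] := prW_swap n [b, d, a] [] hb hd (by omega)
    _ = prW n [b, a, d, a, b] := prW_braid n [b] [b] hd ha (by omega)

/-- adj a d, adj a b, far d b -/
lemma idI6 (ha : Vld n a) (hb : Vld n b) (hd : Vld n d)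
    (had : a + 1 = d ∨ d + 1 = a) (hab : a + 1 = b ∨ b + 1 = a)
    (hdb : d + 2 ≤ b ∨ b + 2 ≤ d) :
    prW n [d, a, b, d, a] = prW n [a, b, d, a, b] := by
  calc prW n [d, a, b, d, a] = prW n [d, a, d, b, a] := prW_swap n [d, a] [a] hb hd (by omega)
    _ = prW n [a, d, a, b, a] := prW_braid n [] [b, a] hd ha (by omega)
    _ = prW n [a, d, b, a, b] := prW_braid n [a, d] [] ha hb hab
    _ = prW n [a, b, d, a, b] := prW_swap n [a] [a, b] hd hb (by omega)

end Identities



lemma pr_mul (n : ℕ) (u v : Word n) : pr n (u * v) = pr n u * pr n v := map_mul _ _ _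

lemma pr_cons (n a : ℕ) (z : Word n) : pr n (sigma n a * z) = sq n a * pr n z := map_mul _ _ _

lemma prW_prW (n : ℕ) (l₁ l₂ : List ℕ) (z : PB n) :
    prW n l₁ * (prW n l₂ * z) = prW n (l₁ ++ l₂) * z := by
  rw [prW_append, mul_assoc]

lemma prW_single (n a : ℕ) : prW n [a] = sq n a := by
  simp [prW_cons, prW_nil]

lemma wordOf_singleton (n a : ℕ) : wordOf n [a] = sigma n a := by simp [wordOf]

lemma wlen_wordOf {n : ℕ} {l : List ℕ} (hval : ∀ x ∈ l, Vld n x) :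
    wlen (wordOf n l) = l.length := by
  induction l with
  | nil => rfl
  | cons x xs ih =>
      rw [wordOf_cons, wlen_mul, wlen_sigma (hval x List.mem_cons_self),
        ih (fun y hy => hval y (List.mem_cons_of_mem x hy)), List.length_cons]
      omega

lemma wlen_comp_eq {n : ℕ} {u z : Word n} {l : List ℕ} (hval : ∀ x ∈ l, Vld n x)
    (h : pr n u = prW n l * pr n z) : wlen u = l.length + wlen z := by
  rw [prW_mul_pr] at h
  have h2 := wlen_pr_eq h
  rw [wlen_mul, wlen_wordOf hval] at h2
  exact h2


lemma vld_single {n a : ℕ} (ha : Vld n a) : ∀ x ∈ [a], Vld n x := by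
  intro x hx; simp at hx; subst hx; exact ha

lemma vld_pair {n a b : ℕ} (ha : Vld n a) (hb : Vld n b) : ∀ x ∈ [a, b], Vld n x := by
  intro x hx
  simp at hx
  rcases hx with rfl | rfl
  · exact ha
  · exact hb

/-- The statement of the key lemma, with a bound on the length of the left tail. -/
def KLP (n K : ℕ) : Prop :=
  ∀ (u' v' : Word n) (a b : ℕ), Vld n a → Vld n b → wlen u' < K →
    braidCon n (sigma n a * u') (sigma n b * v') →
    ∃ z : Word n, pr n u' = prW n (comp a b) * pr n z ∧ pr n v' = prW n (comp b a) * pr n z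

lemma braidCon_of_pr {n : ℕ} {u v : Word n} (h : pr n u = pr n v) : braidCon n u v :=
  (pr_eq_iff n u v).mp h

/-- Case analysis when a commutation relation was applied at the head of the word. -/
lemma caseA (n : ℕ) {K : ℕ} (ihs : KLP n K)
    {a d b : ℕ} (ha : Vld n a) (hd : Vld n d) (hb : Vld n b)
    (hfar : a + 2 ≤ d ∨ d + 2 ≤ a)
    {s v z₁ : Word n}
    (hK : wlen s < K)
    (h₁ : pr n (sigma n a * s) = prW n (comp d b) * pr n z₁)
    (h₂ : pr n v = prW n (comp b d) * pr n z₁) :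
    ∃ z : Word n, pr n (sigma n d * s) = prW n (comp a b) * pr n z ∧
      pr n v = prW n (comp b a) * pr n z := by
  by_cases hdb : d = b
  · -- A1 : d = b
    subst hdb
    rw [comp_self, prW_nil, one_mul] at h₁ h₂
    refine ⟨s, ?_, ?_⟩
    · rw [comp_far (show a + 2 ≤ d ∨ d + 2 ≤ a from hfar), prW_single, pr_cons]
    · rw [comp_far (show d + 2 ≤ a ∨ a + 2 ≤ d by omega), prW_single, h₂, ← h₁, pr_cons]
  · -- d ≠ b
    have hslen : wlen (sigma n a * s) = wlen s + 1 := by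
      rw [wlen_mul, wlen_sigma ha]; omega
    by_cases hadb : d + 1 = b ∨ b + 1 = d
    · -- comp d b = [b, d], comp b d = [d, b]
      rw [comp_adj hadb] at h₁
      rw [comp_adj (by omega : b + 1 = d ∨ d + 1 = b)] at h₂
      have hz₁len : wlen z₁ + 1 = wlen s := by
        have h := wlen_comp_eq (vld_pair hb hd) h₁
        rw [hslen] at h
        simp at h
        omega
      have hcon : braidCon n (sigma n a * s) (sigma n b * (sigma n d * z₁)) := by
        apply braidCon_of_pr
        rw [h₁, pr_cons, pr_cons]
        simp [prW_cons, prW_nil, mul_assoc]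
      obtain ⟨z₂, hz₂₁, hz₂₂⟩ := ihs s (sigma n d * z₁) a b ha hb hK hcon
      by_cases hab : a = b
      · exfalso; omega
      by_cases haab : a + 1 = b ∨ b + 1 = a
      · -- A2iii-β : adj a b, adj d b, far a d
        rw [comp_adj haab] at hz₂₁
        rw [comp_adj (by omega : b + 1 = a ∨ a + 1 = b)] at hz₂₂
        have hz₂len : wlen s = 2 + wlen z₂ := by
          have h := wlen_comp_eq (vld_pair hb ha) hz₂₁
          simpa using h
        have hcon2 : braidCon n (sigma n d * z₁) (sigma n a * (sigma n b * z₂)) := by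
          apply braidCon_of_pr
          rw [hz₂₂, pr_cons, pr_cons]
          simp [prW_cons, prW_nil, mul_assoc]
        obtain ⟨z₃, hz₃₁, hz₃₂⟩ := ihs z₁ (sigma n b * z₂) d a hd ha (by omega) hcon2
        rw [comp_far (by omega : d + 2 ≤ a ∨ a + 2 ≤ d)] at hz₃₁
        rw [comp_far (by omega : a + 2 ≤ d ∨ d + 2 ≤ a)] at hz₃₂
        have hcon3 : braidCon n (sigma n b * z₂) (sigma n d * z₃) := by
          apply braidCon_of_pr
          rw [hz₃₂, prW_single, pr_cons]
        obtain ⟨z₄, hz₄₁, hz₄₂⟩ := ihs z₂ z₃ b d hb hd (by omega) hcon3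
        rw [comp_adj (by omega : b + 1 = d ∨ d + 1 = b)] at hz₄₁
        rw [comp_adj hadb] at hz₄₂
        refine ⟨wordOf n [d, b, a] * z₄, ?_, ?_⟩
        · rw [comp_adj haab]
          calc pr n (sigma n d * s) = sq n d * pr n s := pr_cons n d s
            _ = sq n d * (prW n [b, a] * pr n z₂) := by rw [hz₂₁]
            _ = prW n [d, b, a] * pr n z₂ := by rw [← prW_single n d, prW_prW]; simp only [List.cons_append, List.nil_append]
            _ = prW n [d, b, a] * (prW n [d, b] * pr n z₄) := by rw [hz₄₁]
            _ = prW n [d, b, a, d, b] * pr n z₄ := by rw [prW_prW]; simp only [List.cons_append, List.nil_append]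
            _ = prW n [b, a, d, b, a] * pr n z₄ := by rw [idI1 ha hb hd hfar haab hadb]
            _ = prW n [b, a] * (prW n [d, b, a] * pr n z₄) := by rw [prW_prW]; simp only [List.cons_append, List.nil_append]
            _ = prW n [b, a] * pr n (wordOf n [d, b, a] * z₄) := by rw [prW_mul_pr]
        · rw [comp_adj (by omega : b + 1 = a ∨ a + 1 = b)]
          calc pr n v = prW n [d, b] * pr n z₁ := h₂
            _ = prW n [d, b] * (prW n [a] * pr n z₃) := by rw [hz₃₁]
            _ = prW n [d, b, a] * pr n z₃ := by rw [prW_prW]; simp only [List.cons_append, List.nil_append]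
            _ = prW n [d, b, a] * (prW n [b, d] * pr n z₄) := by rw [hz₄₂]
            _ = prW n [d, b, a, b, d] * pr n z₄ := by rw [prW_prW]; simp only [List.cons_append, List.nil_append]
            _ = prW n [a, b, d, b, a] * pr n z₄ := by rw [idI2 ha hb hd hfar haab hadb]
            _ = prW n [a, b] * (prW n [d, b, a] * pr n z₄) := by rw [prW_prW]; simp only [List.cons_append, List.nil_append]
            _ = prW n [a, b] * pr n (wordOf n [d, b, a] * z₄) := by rw [prW_mul_pr]
      · -- A2ii-β : far a b, adj d b
        have hfab : a + 2 ≤ b ∨ b + 2 ≤ a := by omega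
        rw [comp_far hfab] at hz₂₁
        rw [comp_far (by omega : b + 2 ≤ a ∨ a + 2 ≤ b)] at hz₂₂
        have hcon2 : braidCon n (sigma n d * z₁) (sigma n a * z₂) := by
          apply braidCon_of_pr
          rw [hz₂₂, prW_single, pr_cons]
        obtain ⟨z₃, hz₃₁, hz₃₂⟩ := ihs z₁ z₂ d a hd ha (by omega) hcon2
        rw [comp_far (by omega : d + 2 ≤ a ∨ a + 2 ≤ d)] at hz₃₁
        rw [comp_far (by omega : a + 2 ≤ d ∨ d + 2 ≤ a)] at hz₃₂
        refine ⟨wordOf n [d, b] * z₃, ?_, ?_⟩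
        · rw [comp_far hfab]
          calc pr n (sigma n d * s) = sq n d * pr n s := pr_cons n d s
            _ = sq n d * (prW n [b] * pr n z₂) := by rw [hz₂₁]
            _ = prW n [d, b] * pr n z₂ := by rw [← prW_single n d, prW_prW]; simp only [List.cons_append, List.nil_append]
            _ = prW n [d, b] * (prW n [d] * pr n z₃) := by rw [hz₃₂]
            _ = prW n [d, b, d] * pr n z₃ := by rw [prW_prW]; simp only [List.cons_append, List.nil_append]
            _ = prW n [b, d, b] * pr n z₃ := by have h' := prW_braid n [] [] hd hb hadb; simp only [List.cons_append, List.nil_append] at h'; rw [h']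
            _ = prW n [b] * (prW n [d, b] * pr n z₃) := by rw [prW_prW]; simp only [List.cons_append, List.nil_append]
            _ = prW n [b] * pr n (wordOf n [d, b] * z₃) := by rw [prW_mul_pr]
        · rw [comp_far (by omega : b + 2 ≤ a ∨ a + 2 ≤ b)]
          calc pr n v = prW n [d, b] * pr n z₁ := h₂
            _ = prW n [d, b] * (prW n [a] * pr n z₃) := by rw [hz₃₁]
            _ = prW n [d, b, a] * pr n z₃ := by rw [prW_prW]; simp only [List.cons_append, List.nil_append]
            _ = prW n [d, a, b] * pr n z₃ := by have h' := prW_swap n [d] [] hb ha (by omega); simp only [List.cons_append, List.nil_append] at h'; rw [h']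
            _ = prW n [a, d, b] * pr n z₃ := by have h' := prW_swap n [] [b] hd ha (by omega); simp only [List.cons_append, List.nil_append] at h'; rw [h']
            _ = prW n [a] * (prW n [d, b] * pr n z₃) := by rw [prW_prW]; simp only [List.cons_append, List.nil_append]
            _ = prW n [a] * pr n (wordOf n [d, b] * z₃) := by rw [prW_mul_pr]
    · -- far d b
      have hfdb : d + 2 ≤ b ∨ b + 2 ≤ d := by omega
      rw [comp_far hfdb] at h₁
      rw [comp_far (by omega : b + 2 ≤ d ∨ d + 2 ≤ b)] at h₂
      have hcon : braidCon n (sigma n a * s) (sigma n b * z₁) := by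
        apply braidCon_of_pr
        rw [h₁, prW_single, pr_cons]
      obtain ⟨z₂, hz₂₁, hz₂₂⟩ := ihs s z₁ a b ha hb hK hcon
      by_cases hab : a = b
      · -- A2i : a = b
        subst hab
        rw [comp_self, prW_nil, one_mul] at hz₂₁ hz₂₂
        refine ⟨sigma n d * s, ?_, ?_⟩
        · rw [comp_self, prW_nil, one_mul]
        · rw [comp_self, prW_nil, one_mul, h₂, prW_single, hz₂₂, ← hz₂₁, pr_cons]
      by_cases haab : a + 1 = b ∨ b + 1 = a
      · -- A2iii-α : adj a b, far d b
        rw [comp_adj haab] at hz₂₁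
        rw [comp_adj (by omega : b + 1 = a ∨ a + 1 = b)] at hz₂₂
        refine ⟨sigma n d * z₂, ?_, ?_⟩
        · rw [comp_adj haab]
          calc pr n (sigma n d * s) = sq n d * pr n s := pr_cons n d s
            _ = sq n d * (prW n [b, a] * pr n z₂) := by rw [hz₂₁]
            _ = prW n [d, b, a] * pr n z₂ := by rw [← prW_single n d, prW_prW]; simp only [List.cons_append, List.nil_append]
            _ = prW n [b, d, a] * pr n z₂ := by have h' := prW_swap n [] [a] hd hb hfdb; simp only [List.cons_append, List.nil_append] at h'; rw [h']
            _ = prW n [b, a, d] * pr n z₂ := by have h' := prW_swap n [b] [] hd ha (by omega); simp only [List.cons_append, List.nil_append] at h'; rw [h']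
            _ = prW n [b, a] * (prW n [d] * pr n z₂) := by rw [prW_prW]; simp only [List.cons_append, List.nil_append]
            _ = prW n [b, a] * pr n (sigma n d * z₂) := by rw [pr_cons, ← prW_single n d]
        · rw [comp_adj (by omega : b + 1 = a ∨ a + 1 = b)]
          calc pr n v = prW n [d] * pr n z₁ := h₂
            _ = prW n [d] * (prW n [a, b] * pr n z₂) := by rw [hz₂₂]
            _ = prW n [d, a, b] * pr n z₂ := by rw [prW_prW]; simp only [List.cons_append, List.nil_append]
            _ = prW n [a, d, b] * pr n z₂ := by have h' := prW_swap n [] [b] hd ha (by omega); simp only [List.cons_append, List.nil_append] at h'; rw [h']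
            _ = prW n [a, b, d] * pr n z₂ := by have h' := prW_swap n [a] [] hd hb hfdb; simp only [List.cons_append, List.nil_append] at h'; rw [h']
            _ = prW n [a, b] * (prW n [d] * pr n z₂) := by rw [prW_prW]; simp only [List.cons_append, List.nil_append]
            _ = prW n [a, b] * pr n (sigma n d * z₂) := by rw [pr_cons, ← prW_single n d]
      · -- A2ii-α : far a b, far d b
        have hfab : a + 2 ≤ b ∨ b + 2 ≤ a := by omega
        rw [comp_far hfab] at hz₂₁
        rw [comp_far (by omega : b + 2 ≤ a ∨ a + 2 ≤ b)] at hz₂₂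
        refine ⟨sigma n d * z₂, ?_, ?_⟩
        · rw [comp_far hfab]
          calc pr n (sigma n d * s) = sq n d * pr n s := pr_cons n d s
            _ = sq n d * (prW n [b] * pr n z₂) := by rw [hz₂₁]
            _ = prW n [d, b] * pr n z₂ := by rw [← prW_single n d, prW_prW]; simp only [List.cons_append, List.nil_append]
            _ = prW n [b, d] * pr n z₂ := by have h' := prW_swap n [] [] hd hb hfdb; simp only [List.cons_append, List.nil_append] at h'; rw [h']
            _ = prW n [b] * (prW n [d] * pr n z₂) := by rw [prW_prW]; simp only [List.cons_append, List.nil_append]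
            _ = prW n [b] * pr n (sigma n d * z₂) := by rw [pr_cons, ← prW_single n d]
        · rw [comp_far (by omega : b + 2 ≤ a ∨ a + 2 ≤ b)]
          calc pr n v = prW n [d] * pr n z₁ := h₂
            _ = prW n [d] * (prW n [a] * pr n z₂) := by rw [hz₂₂]
            _ = prW n [d, a] * pr n z₂ := by rw [prW_prW]; simp only [List.cons_append, List.nil_append]
            _ = prW n [a, d] * pr n z₂ := by have h' := prW_swap n [] [] hd ha (by omega); simp only [List.cons_append, List.nil_append] at h'; rw [h']
            _ = prW n [a] * (prW n [d] * pr n z₂) := by rw [prW_prW]; simp only [List.cons_append, List.nil_append]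
            _ = prW n [a] * pr n (sigma n d * z₂) := by rw [pr_cons, ← prW_single n d]

/-- Case analysis when a braid relation was applied at the head of the word. -/
lemma caseB (n : ℕ) {K : ℕ} (ihs : KLP n K)
    {a d b : ℕ} (ha : Vld n a) (hd : Vld n d) (hb : Vld n b)
    (hadj : a + 1 = d ∨ d + 1 = a)
    {s v z₁ : Word n}
    (hK : wlen s + 1 < K)
    (h₁ : pr n (sigma n a * (sigma n d * s)) = prW n (comp d b) * pr n z₁)
    (h₂ : pr n v = prW n (comp b d) * pr n z₁) :
    ∃ z : Word n, pr n (sigma n d * (sigma n a * s)) = prW n (comp a b) * pr n z ∧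
      pr n v = prW n (comp b a) * pr n z := by
  by_cases hdb : d = b
  · -- B1 : d = b
    subst hdb
    rw [comp_self, prW_nil, one_mul] at h₁ h₂
    refine ⟨s, ?_, ?_⟩
    · rw [comp_adj (show a + 1 = d ∨ d + 1 = a from hadj), pr_cons, pr_cons]
      simp [prW_cons, prW_nil, mul_assoc]
    · rw [comp_adj (show d + 1 = a ∨ a + 1 = d by omega), h₂, ← h₁, pr_cons, pr_cons]
      simp [prW_cons, prW_nil, mul_assoc]
  · -- d ≠ b
    have hlen : wlen (sigma n a * (sigma n d * s)) = wlen s + 2 := by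
      rw [wlen_mul, wlen_mul, wlen_sigma ha, wlen_sigma hd]; omega
    by_cases hadb : d + 1 = b ∨ b + 1 = d
    · -- adj d b ; comp d b = [b, d]
      rw [comp_adj hadb] at h₁
      rw [comp_adj (by omega : b + 1 = d ∨ d + 1 = b)] at h₂
      have hz₁len : wlen z₁ = wlen s := by
        have h := wlen_comp_eq (vld_pair hb hd) h₁
        rw [hlen] at h
        simp at h
        omega
      have hcon : braidCon n (sigma n a * (sigma n d * s)) (sigma n b * (sigma n d * z₁)) := by
        apply braidCon_of_pr
        rw [h₁, pr_cons, pr_cons]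
        simp [prW_cons, prW_nil, mul_assoc]
      obtain ⟨z₂, hz₂₁, hz₂₂⟩ := ihs (sigma n d * s) (sigma n d * z₁) a b ha hb
        (by rw [wlen_mul, wlen_sigma hd]; omega) hcon
      by_cases hab : a = b
      · -- B2i : a = b (so adj d a)
        subst hab
        rw [comp_self, prW_nil, one_mul] at hz₂₁ hz₂₂
        have hcon2 : braidCon n (sigma n d * z₁) (sigma n d * s) := by
          exact braidCon_of_pr (hz₂₂.trans hz₂₁.symm)
        obtain ⟨z₃, hz₃₁, hz₃₂⟩ := ihs z₁ s d d hd hd (by omega) hcon2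
        rw [comp_self, prW_nil, one_mul] at hz₃₁ hz₃₂
        refine ⟨sigma n d * (sigma n a * s), ?_, ?_⟩
        · rw [comp_self, prW_nil, one_mul]
        · rw [comp_self, prW_nil, one_mul, h₂, pr_cons, pr_cons, hz₃₁, ← hz₃₂]
          simp [prW_cons, prW_nil, mul_assoc]
      · by_cases haab : a + 1 = b ∨ b + 1 = a
        · -- impossible : a adj d, a adj b, d adj b
          exfalso; omega
        · -- B2ii-β : far a b, adj d b
          have hfab : a + 2 ≤ b ∨ b + 2 ≤ a := by omega
          rw [comp_far hfab] at hz₂₁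
          rw [comp_far (by omega : b + 2 ≤ a ∨ a + 2 ≤ b)] at hz₂₂
          have hcon2 : braidCon n (sigma n d * s) (sigma n b * z₂) := by
            apply braidCon_of_pr
            rw [hz₂₁, prW_single, pr_cons]
          obtain ⟨z₃, hz₃₁, hz₃₂⟩ := ihs s z₂ d b hd hb (by omega) hcon2
          rw [comp_adj hadb] at hz₃₁
          rw [comp_adj (by omega : b + 1 = d ∨ d + 1 = b)] at hz₃₂
          have hcon3 : braidCon n (sigma n d * z₁) (sigma n a * z₂) := by
            apply braidCon_of_pr
            rw [hz₂₂, prW_single, pr_cons]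
          obtain ⟨z₄, hz₄₁, hz₄₂⟩ := ihs z₁ z₂ d a hd ha (by omega) hcon3
          rw [comp_adj (by omega : d + 1 = a ∨ a + 1 = d)] at hz₄₁
          rw [comp_adj (by omega : a + 1 = d ∨ d + 1 = a)] at hz₄₂
          have hz₃len : wlen z₂ = 2 + wlen z₃ := wlen_comp_eq (vld_pair hd hb) hz₃₂
          have hz₂len : wlen z₂ = wlen s := by
            have h := wlen_comp_eq (vld_single hb) hz₂₁
            rw [wlen_mul, wlen_sigma hd] at h
            simp at h
            omega
          have hcon4 : braidCon n (sigma n b * z₃) (sigma n a * z₄) := by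
            have e1 : pr n (sigma n d * (sigma n b * z₃)) = pr n (sigma n d * (sigma n a * z₄)) := by
              rw [pr_cons, pr_cons, pr_cons, pr_cons]
              have l3 : sq n d * (sq n b * pr n z₃) = pr n z₂ := by
                rw [hz₃₂]; simp [prW_cons, prW_nil, mul_assoc]
              have l4 : sq n d * (sq n a * pr n z₄) = pr n z₂ := by
                rw [hz₄₂]; simp [prW_cons, prW_nil, mul_assoc]
              rw [l3, l4]
            have hcc : braidCon n (sigma n d * (sigma n b * z₃)) (sigma n d * (sigma n a * z₄)) :=
              braidCon_of_pr e1
            obtain ⟨z₅, hz₅₁, hz₅₂⟩ := ihs (sigma n b * z₃) (sigma n a * z₄) d d hd hd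
              (by rw [wlen_mul, wlen_sigma hb]; omega) hcc
            rw [comp_self, prW_nil, one_mul] at hz₅₁ hz₅₂
            exact braidCon_of_pr (hz₅₁.trans hz₅₂.symm)
          obtain ⟨z₆, hz₆₁, hz₆₂⟩ := ihs z₃ z₄ b a hb ha (by omega) hcon4
          rw [comp_far (by omega : b + 2 ≤ a ∨ a + 2 ≤ b)] at hz₆₁
          rw [comp_far hfab] at hz₆₂
          refine ⟨wordOf n [d, b, a, d] * z₆, ?_, ?_⟩
          · rw [comp_far hfab]
            calc pr n (sigma n d * (sigma n a * s)) = sq n d * (sq n a * pr n s) := by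
                  rw [pr_cons, pr_cons]
              _ = sq n d * (sq n a * (prW n [b, d] * pr n z₃)) := by rw [hz₃₁]
              _ = prW n [d, a, b, d] * pr n z₃ := by
                  rw [← prW_single n d, ← prW_single n a, prW_prW, prW_prW]
                  simp only [List.cons_append, List.nil_append]
              _ = prW n [d, a, b, d] * (prW n [a] * pr n z₆) := by rw [hz₆₁]
              _ = prW n [d, a, b, d, a] * pr n z₆ := by rw [prW_prW]; simp only [List.cons_append, List.nil_append]
              _ = prW n [b, d, b, a, d] * pr n z₆ := by rw [idI3 ha hb hd hadj hfab hadb]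
              _ = prW n [b] * (prW n [d, b, a, d] * pr n z₆) := by rw [prW_prW]; simp only [List.cons_append, List.nil_append]
              _ = prW n [b] * pr n (wordOf n [d, b, a, d] * z₆) := by rw [prW_mul_pr]
          · rw [comp_far (by omega : b + 2 ≤ a ∨ a + 2 ≤ b)]
            calc pr n v = prW n [d, b] * pr n z₁ := h₂
              _ = prW n [d, b] * (prW n [a, d] * pr n z₄) := by rw [hz₄₁]
              _ = prW n [d, b, a, d] * pr n z₄ := by rw [prW_prW]; simp only [List.cons_append, List.nil_append]
              _ = prW n [d, b, a, d] * (prW n [b] * pr n z₆) := by rw [hz₆₂]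
              _ = prW n [d, b, a, d, b] * pr n z₆ := by rw [prW_prW]; simp only [List.cons_append, List.nil_append]
              _ = prW n [a, d, b, a, d] * pr n z₆ := by rw [idI4 ha hb hd hadj hfab hadb]
              _ = prW n [a] * (prW n [d, b, a, d] * pr n z₆) := by rw [prW_prW]; simp only [List.cons_append, List.nil_append]
              _ = prW n [a] * pr n (wordOf n [d, b, a, d] * z₆) := by rw [prW_mul_pr]
    · -- far d b ; comp d b = [b]
      have hfdb : d + 2 ≤ b ∨ b + 2 ≤ d := by omega
      rw [comp_far hfdb] at h₁
      rw [comp_far (by omega : b + 2 ≤ d ∨ d + 2 ≤ b)] at h₂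
      have hcon : braidCon n (sigma n a * (sigma n d * s)) (sigma n b * z₁) := by
        apply braidCon_of_pr
        rw [h₁, prW_single, pr_cons]
      obtain ⟨z₂, hz₂₁, hz₂₂⟩ := ihs (sigma n d * s) z₁ a b ha hb
        (by rw [wlen_mul, wlen_sigma hd]; omega) hcon
      by_cases hab : a = b
      · exfalso; omega
      · by_cases haab : a + 1 = b ∨ b + 1 = a
        · -- B2iii : adj a b, adj a d, far d b
          rw [comp_adj haab] at hz₂₁
          rw [comp_adj (by omega : b + 1 = a ∨ a + 1 = b)] at hz₂₂
          have hz₂len : wlen s = 1 + wlen z₂ := by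
            have h := wlen_comp_eq (vld_pair hb ha) hz₂₁
            rw [wlen_mul, wlen_sigma hd] at h
            simp at h
            omega
          have hcon2 : braidCon n (sigma n d * s) (sigma n b * (sigma n a * z₂)) := by
            apply braidCon_of_pr
            rw [hz₂₁, pr_cons, pr_cons]
            simp [prW_cons, prW_nil, mul_assoc]
          obtain ⟨z₃, hz₃₁, hz₃₂⟩ := ihs s (sigma n a * z₂) d b hd hb (by omega) hcon2
          rw [comp_far hfdb] at hz₃₁
          rw [comp_far (by omega : b + 2 ≤ d ∨ d + 2 ≤ b)] at hz₃₂
          have hcon3 : braidCon n (sigma n a * z₂) (sigma n d * z₃) := by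
            apply braidCon_of_pr
            rw [hz₃₂, prW_single, pr_cons]
          have hz₃len : wlen s = 1 + wlen z₃ := by
            have h := wlen_comp_eq (vld_single hb) hz₃₁
            simp at h
            omega
          obtain ⟨z₄, hz₄₁, hz₄₂⟩ := ihs z₂ z₃ a d ha hd (by omega) hcon3
          rw [comp_adj hadj] at hz₄₁
          rw [comp_adj (by omega : d + 1 = a ∨ a + 1 = d)] at hz₄₂
          refine ⟨wordOf n [d, a, b] * z₄, ?_, ?_⟩
          · rw [comp_adj haab]
            calc pr n (sigma n d * (sigma n a * s)) = sq n d * (sq n a * pr n s) := by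
                  rw [pr_cons, pr_cons]
              _ = sq n d * (sq n a * (prW n [b] * pr n z₃)) := by rw [hz₃₁]
              _ = prW n [d, a, b] * pr n z₃ := by
                  rw [← prW_single n d, ← prW_single n a, prW_prW, prW_prW]
                  simp only [List.cons_append, List.nil_append]
              _ = prW n [d, a, b] * (prW n [a, d] * pr n z₄) := by rw [hz₄₂]
              _ = prW n [d, a, b, a, d] * pr n z₄ := by rw [prW_prW]; simp only [List.cons_append, List.nil_append]
              _ = prW n [b, a, d, a, b] * pr n z₄ := by rw [idI5 ha hb hd hadj haab hfdb]
              _ = prW n [b, a] * (prW n [d, a, b] * pr n z₄) := by rw [prW_prW]; simp only [List.cons_append, List.nil_append]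
              _ = prW n [b, a] * pr n (wordOf n [d, a, b] * z₄) := by rw [prW_mul_pr]
          · rw [comp_adj (by omega : b + 1 = a ∨ a + 1 = b)]
            calc pr n v = prW n [d] * pr n z₁ := h₂
              _ = prW n [d] * (prW n [a, b] * pr n z₂) := by rw [hz₂₂]
              _ = prW n [d, a, b] * pr n z₂ := by rw [prW_prW]; simp only [List.cons_append, List.nil_append]
              _ = prW n [d, a, b] * (prW n [d, a] * pr n z₄) := by rw [hz₄₁]
              _ = prW n [d, a, b, d, a] * pr n z₄ := by rw [prW_prW]; simp only [List.cons_append, List.nil_append]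
              _ = prW n [a, b, d, a, b] * pr n z₄ := by rw [idI6 ha hb hd hadj haab hfdb]
              _ = prW n [a, b] * (prW n [d, a, b] * pr n z₄) := by rw [prW_prW]; simp only [List.cons_append, List.nil_append]
              _ = prW n [a, b] * pr n (wordOf n [d, a, b] * z₄) := by rw [prW_mul_pr]
        · -- B2ii-α : far a b, far d b
          have hfab : a + 2 ≤ b ∨ b + 2 ≤ a := by omega
          rw [comp_far hfab] at hz₂₁
          rw [comp_far (by omega : b + 2 ≤ a ∨ a + 2 ≤ b)] at hz₂₂
          have hz₂len : wlen s = wlen z₂ := by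
            have h := wlen_comp_eq (vld_single hb) hz₂₁
            rw [wlen_mul, wlen_sigma hd] at h
            simp at h
            omega
          have hcon2 : braidCon n (sigma n d * s) (sigma n b * z₂) := by
            apply braidCon_of_pr
            rw [hz₂₁, prW_single, pr_cons]
          obtain ⟨z₃, hz₃₁, hz₃₂⟩ := ihs s z₂ d b hd hb (by omega) hcon2
          rw [comp_far hfdb] at hz₃₁
          rw [comp_far (by omega : b + 2 ≤ d ∨ d + 2 ≤ b)] at hz₃₂
          refine ⟨wordOf n [d, a] * z₃, ?_, ?_⟩
          · rw [comp_far hfab]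
            calc pr n (sigma n d * (sigma n a * s)) = sq n d * (sq n a * pr n s) := by
                  rw [pr_cons, pr_cons]
              _ = sq n d * (sq n a * (prW n [b] * pr n z₃)) := by rw [hz₃₁]
              _ = prW n [d, a, b] * pr n z₃ := by
                  rw [← prW_single n d, ← prW_single n a, prW_prW, prW_prW]
                  simp only [List.cons_append, List.nil_append]
              _ = prW n [d, b, a] * pr n z₃ := by have h' := prW_swap n [d] [] ha hb hfab; simp only [List.cons_append, List.nil_append] at h'; rw [h']
              _ = prW n [b, d, a] * pr n z₃ := by have h' := prW_swap n [] [a] hd hb hfdb; simp only [List.cons_append, List.nil_append] at h'; rw [h']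
              _ = prW n [b] * (prW n [d, a] * pr n z₃) := by rw [prW_prW]; simp only [List.cons_append, List.nil_append]
              _ = prW n [b] * pr n (wordOf n [d, a] * z₃) := by rw [prW_mul_pr]
          · rw [comp_far (by omega : b + 2 ≤ a ∨ a + 2 ≤ b)]
            calc pr n v = prW n [d] * pr n z₁ := h₂
              _ = prW n [d] * (prW n [a] * pr n z₂) := by rw [hz₂₂]
              _ = prW n [d, a] * pr n z₂ := by rw [prW_prW]; simp only [List.cons_append, List.nil_append]
              _ = prW n [d, a] * (prW n [d] * pr n z₃) := by rw [hz₃₂]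
              _ = prW n [d, a, d] * pr n z₃ := by rw [prW_prW]; simp only [List.cons_append, List.nil_append]
              _ = prW n [a, d, a] * pr n z₃ := by have h' := prW_braid n [] [] hd ha (by omega); simp only [List.nil_append] at h'; rw [h']
              _ = prW n [a] * (prW n [d, a] * pr n z₃) := by rw [prW_prW]; simp only [List.cons_append, List.nil_append]
              _ = prW n [a] * pr n (wordOf n [d, a] * z₃) := by rw [prW_mul_pr]

lemma wlen_eq_zero {n : ℕ} {u : Word n} (h : wlen u = 0) : u = 1 := by
  apply FreeMonoid.toList.injective
  simpa [wlen, List.length_eq_zero_iff] using h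

lemma wlen_braidrel {n : ℕ} {l r : Word n} (h : BraidRel n l r) : wlen l = wlen r := by
  cases h with
  | comm i j hi hi' hj hj' _ =>
      rw [wlen_mul, wlen_mul, wlen_sigma ⟨hi, hi'⟩, wlen_sigma ⟨hj, hj'⟩]
  | braid i hi hi' =>
      rw [wlen_mul, wlen_mul, wlen_mul, wlen_mul, wlen_sigma ⟨hi, by omega⟩,
        wlen_sigma ⟨by omega, hi'⟩]

/-- The key lemma (completeness of reversing / Garside's lemma). -/
theorem KL (n : ℕ) : ∀ K, KLP n K := by
  intro K
  induction K using Nat.strong_induction_on with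
  | _ K ihK =>
    intro u v a b ha hb hlen hcon
    have hchain := braidCon_iff_chain.mp hcon
    clear hcon
    -- inner induction on the chain
    have main : ∀ w, Relation.ReflTransGen (Step n) w (sigma n b * v) →
        ∀ (a : ℕ) (u : Word n), Vld n a → w = sigma n a * u → wlen u < K →
        ∃ z : Word n, pr n u = prW n (comp a b) * pr n z ∧
          pr n v = prW n (comp b a) * pr n z := by
      intro w hch
      induction hch using Relation.ReflTransGen.head_induction_on with
      | refl =>
          intro a u ha' hw hlen'
          obtain ⟨hab, huv⟩ := head_inj hb ha' hw
          refine ⟨u, ?_, ?_⟩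
          · rw [hab, comp_self, prW_nil, one_mul]
          · rw [hab, comp_self, prW_nil, one_mul, huv]
      | head hstep hch ih =>
          intro a u ha' hw hlen'
          obtain ⟨p, s0, l, r, hrel, hx, hc⟩ := hstep
          subst hc
          rw [hw] at hx
          by_cases hp : wlen p = 0
          · -- the rewrite happened at the head
            have hp1 : p = 1 := wlen_eq_zero hp
            subst hp1
            rcases hrel with h | h
            · cases h with
              | comm i j hi hi' hj hj' hfar =>
                  have hvi : Vld n i := ⟨hi, hi'⟩
                  have hvj : Vld n j := ⟨hj, hj'⟩
                  simp only [one_mul, mul_assoc] at hx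
                  obtain ⟨hai, hu⟩ := head_inj ha' hvi hx
                  subst hai
                  have hulen : wlen u = wlen s0 + 1 := by
                    rw [hu, wlen_mul, wlen_sigma hvj]; omega
                  obtain ⟨z₁, h₁, h₂⟩ := ih j (sigma n a * s0) hvj
                    (by simp only [one_mul, mul_assoc]) (by rw [wlen_mul, wlen_sigma hvi]; omega)
                  obtain ⟨z, hz1, hz2⟩ := caseA n (ihK (wlen s0 + 1) (by omega)) hvi hvj hb
                    hfar (hK := by omega) (h₁ := h₁) (h₂ := h₂)
                  exact ⟨z, by rw [hu]; exact hz1, hz2⟩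
              | braid i hi hi' =>
                  have hvi : Vld n i := ⟨hi, by omega⟩
                  have hvi1 : Vld n (i + 1) := ⟨by omega, hi'⟩
                  simp only [one_mul, mul_assoc] at hx
                  obtain ⟨hai, hu⟩ := head_inj ha' hvi hx
                  subst hai
                  have hulen : wlen u = wlen s0 + 2 := by
                    rw [hu, wlen_mul, wlen_mul, wlen_sigma hvi1, wlen_sigma hvi]; omega
                  obtain ⟨z₁, h₁, h₂⟩ := ih (a + 1) (sigma n a * (sigma n (a + 1) * s0)) hvi1
                    (by simp only [one_mul, mul_assoc])
                    (by rw [wlen_mul, wlen_mul, wlen_sigma hvi, wlen_sigma hvi1]; omega)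
                  obtain ⟨z, hz1, hz2⟩ := caseB n (ihK (wlen s0 + 2) (by omega)) hvi hvi1 hb
                    (Or.inl rfl) (hK := by omega) (h₁ := h₁) (h₂ := h₂)
                  exact ⟨z, by rw [hu]; exact hz1, hz2⟩
            · cases h with
              | comm i j hi hi' hj hj' hfar =>
                  have hvi : Vld n i := ⟨hi, hi'⟩
                  have hvj : Vld n j := ⟨hj, hj'⟩
                  simp only [one_mul, mul_assoc] at hx
                  obtain ⟨hai, hu⟩ := head_inj ha' hvj hx
                  subst hai
                  have hulen : wlen u = wlen s0 + 1 := by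
                    rw [hu, wlen_mul, wlen_sigma hvi]; omega
                  obtain ⟨z₁, h₁, h₂⟩ := ih i (sigma n a * s0) hvi
                    (by simp only [one_mul, mul_assoc]) (by rw [wlen_mul, wlen_sigma hvj]; omega)
                  obtain ⟨z, hz1, hz2⟩ := caseA n (ihK (wlen s0 + 1) (by omega)) hvj hvi hb
                    (by omega) (hK := by omega) (h₁ := h₁) (h₂ := h₂)
                  exact ⟨z, by rw [hu]; exact hz1, hz2⟩
              | braid i hi hi' =>
                  have hvi : Vld n i := ⟨hi, by omega⟩
                  have hvi1 : Vld n (i + 1) := ⟨by omega, hi'⟩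
                  simp only [one_mul, mul_assoc] at hx
                  obtain ⟨hai, hu⟩ := head_inj ha' hvi1 hx
                  subst hai
                  have hulen : wlen u = wlen s0 + 2 := by
                    rw [hu, wlen_mul, wlen_mul, wlen_sigma hvi, wlen_sigma hvi1]; omega
                  obtain ⟨z₁, h₁, h₂⟩ := ih i (sigma n (i + 1) * (sigma n i * s0)) hvi
                    (by simp only [one_mul, mul_assoc])
                    (by rw [wlen_mul, wlen_mul, wlen_sigma hvi1, wlen_sigma hvi]; omega)
                  obtain ⟨z, hz1, hz2⟩ := caseB n (ihK (wlen s0 + 2) (by omega)) hvi1 hvi hb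
                    (Or.inr rfl) (hK := by omega) (h₁ := h₁) (h₂ := h₂)
                  exact ⟨z, by rw [hu]; exact hz1, hz2⟩
          · -- the rewrite happened inside the tail
            obtain ⟨c, p', hvc, hpc⟩ := head_decomp p hp
            subst hpc
            simp only [mul_assoc] at hx
            obtain ⟨hac, hu⟩ := head_inj ha' hvc hx
            subst hac
            have hlr : wlen l = wlen r := by
              rcases hrel with h | h
              · exact wlen_braidrel h
              · exact (wlen_braidrel h).symm
            have hprlr : pr n l = pr n r := by
              rcases hrel with h | h
              · exact pr_rel h
              · exact (pr_rel h).symm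
            obtain ⟨z, hz1, hz2⟩ := ih a (p' * (r * s0)) ha'
              (by simp only [mul_assoc])
              (by
                rw [hu, wlen_mul, wlen_mul] at hlen'
                rw [wlen_mul, wlen_mul]
                omega)
            refine ⟨z, ?_, hz2⟩
            rw [hu, pr_mul, pr_mul, hprlr, ← pr_mul, ← pr_mul, hz1]
    exact main _ hchain a u ha rfl hlen
/-- Key lemma in projection form. -/
theorem KLfull {n : ℕ} {u v : Word n} {a b : ℕ} (ha : Vld n a) (hb : Vld n b)
    (h : pr n (sigma n a * u) = pr n (sigma n b * v)) :
    ∃ z : Word n, pr n u = prW n (comp a b) * pr n z ∧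
      pr n v = prW n (comp b a) * pr n z :=
  KL n (wlen u + 1) u v a b ha hb (by omega) (braidCon_of_pr h)

/-- the value of `σ_j ∖ (σ_(i-1)σ_i)`, via least common right-multiples. -/
theorem statement_4 (n : ℕ) (hn : 2 ≤ n) (i j : ℕ) (hi : 2 ≤ i) (hi' : i ≤ n - 1)
    (hj : 1 ≤ j) (hj' : j ≤ n - 1) :
    IsLcm n {pr n (sigma n j), pr n (sigma n (i - 1) * sigma n i)}
      (pr n (sigma n j) *
        pr n (if j = i - 2 then (sigma n (i - 1) * sigma n i) * (sigma n (i - 2) * sigma n (i - 1))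
          else if j = i - 1 then sigma n i
          else if j = i + 1 then sigma n (i - 1) * sigma n i * sigma n (i + 1)
          else sigma n (i - 1) * sigma n i)) := by
  have hvj : Vld n j := ⟨hj, hj'⟩
  have hvi : Vld n i := ⟨by omega, hi'⟩
  have hvi1 : Vld n (i - 1) := ⟨by omega, by omega⟩
  have hx2 : pr n (sigma n (i - 1) * sigma n i) = prW n [i - 1, i] := by
    simp [pr_mul, prW_cons, prW_nil, sq]
  constructor
  · -- both elements divide the candidate
    intro y hy
    simp only [Set.mem_insert_iff, Set.mem_singleton_iff] at hy
    rcases hy with rfl | rfl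
    · exact ⟨_, rfl⟩
    · by_cases h2 : j = i - 2
      · rw [if_pos h2]
        have h3i : 3 ≤ i := by omega
        have hvi2 : Vld n (i - 2) := ⟨by omega, by omega⟩
        refine ⟨prW n [i - 2, i - 1, i], ?_⟩
        have lhs : pr n (sigma n (i - 1) * sigma n i) * prW n [i - 2, i - 1, i] =
            prW n [i - 1, i, i - 2, i - 1, i] := by
          simp [pr_mul, prW_cons, prW_nil, sq, mul_assoc]
        have rhs : pr n (sigma n j) *
            pr n ((sigma n (i - 1) * sigma n i) * (sigma n (i - 2) * sigma n (i - 1))) =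
            prW n [i - 2, i - 1, i, i - 2, i - 1] := by
          rw [h2]
          simp [pr_mul, prW_cons, prW_nil, sq, mul_assoc]
        rw [lhs, rhs]
        exact (idI6 hvi1 hvi hvi2 (by omega) (by omega) (by omega)).symm
      · by_cases h3 : j = i - 1
        · rw [if_neg h2, if_pos h3]
          refine ⟨1, ?_⟩
          rw [mul_one, h3, pr_mul]
        · by_cases h4 : j = i + 1
          · rw [if_neg h2, if_neg h3, if_pos h4]
            have hvip : Vld n (i + 1) := ⟨by omega, by omega⟩
            refine ⟨prW n [i + 1, i], ?_⟩
            have lhs : pr n (sigma n (i - 1) * sigma n i) * prW n [i + 1, i] =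
                prW n [i - 1, i, i + 1, i] := by
              simp [pr_mul, prW_cons, prW_nil, sq, mul_assoc]
            have rhs : pr n (sigma n j) *
                pr n (sigma n (i - 1) * sigma n i * sigma n (i + 1)) =
                prW n [i + 1, i - 1, i, i + 1] := by
              rw [h4]
              simp [pr_mul, prW_cons, prW_nil, sq, mul_assoc]
            rw [lhs, rhs]
            have e1 : prW n [i + 1, i - 1, i, i + 1] = prW n [i - 1, i + 1, i, i + 1] := by
              have h' := prW_swap n [] [i, i + 1] hvip hvi1 (by omega)
              simp only [List.cons_append, List.nil_append] at h'
              rw [h']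
            have e2 : prW n [i - 1, i + 1, i, i + 1] = prW n [i - 1, i, i + 1, i] := by
              have h' := prW_braid n [i - 1] [] hvip hvi (by omega)
              simp only [List.cons_append, List.nil_append] at h'
              rw [h']
            rw [e1, e2]
          · rw [if_neg h2, if_neg h3, if_neg h4]
            by_cases h5 : j = i
            · refine ⟨sq n (i - 1), ?_⟩
              have lhs : pr n (sigma n (i - 1) * sigma n i) * sq n (i - 1) =
                  prW n [i - 1, i, i - 1] := by
                simp [pr_mul, prW_cons, prW_nil, sq, mul_assoc]
              have rhs : pr n (sigma n j) * pr n (sigma n (i - 1) * sigma n i) =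
                  prW n [i, i - 1, i] := by
                rw [h5]
                simp [pr_mul, prW_cons, prW_nil, sq, mul_assoc]
              rw [lhs, rhs]
              have h' := prW_braid n [] [] hvi hvi1 (by omega)
              simp only [List.nil_append] at h'
              rw [h']
            · -- far from both
              have hf1 : j + 2 ≤ i - 1 ∨ (i - 1) + 2 ≤ j := by omega
              have hf2 : j + 2 ≤ i ∨ i + 2 ≤ j := by omega
              refine ⟨sq n j, ?_⟩
              have lhs : pr n (sigma n (i - 1) * sigma n i) * sq n j =
                  prW n [i - 1, i, j] := by
                simp [pr_mul, prW_cons, prW_nil, sq, mul_assoc]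
              have rhs : pr n (sigma n j) * pr n (sigma n (i - 1) * sigma n i) =
                  prW n [j, i - 1, i] := by
                simp [pr_mul, prW_cons, prW_nil, sq, mul_assoc]
              rw [lhs, rhs]
              have e1 : prW n [j, i - 1, i] = prW n [i - 1, j, i] := by
                have h' := prW_swap n [] [i] hvj hvi1 hf1
                simp only [List.cons_append, List.nil_append] at h'
                rw [h']
              have e2 : prW n [i - 1, j, i] = prW n [i - 1, i, j] := by
                have h' := prW_swap n [i - 1] [] hvj hvi hf2
                simp only [List.cons_append, List.nil_append] at h'
                rw [h']
              rw [e1, e2]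
  · -- the candidate divides every common multiple
    intro e he
    obtain ⟨c₁, hc₁⟩ := he _ (Set.mem_insert _ _)
    obtain ⟨c₂, hc₂⟩ := he _ (Set.mem_insert_of_mem _ rfl)
    obtain ⟨u, rfl⟩ := Con.mk'_surjective c₁
    obtain ⟨v, rfl⟩ := Con.mk'_surjective c₂
    replace hc₁ : pr n (sigma n j) * pr n u = e := hc₁
    replace hc₂ : pr n (sigma n (i - 1) * sigma n i) * pr n v = e := hc₂
    have heq : pr n (sigma n j * u) = pr n (sigma n (i - 1) * (sigma n i * v)) := by
      have r1 : pr n (sigma n (i - 1) * (sigma n i * v)) =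
          pr n (sigma n (i - 1) * sigma n i) * pr n v := by
        rw [pr_mul, pr_mul, pr_mul, mul_assoc]
      rw [pr_mul, r1]
      exact hc₁.trans hc₂.symm
    obtain ⟨z, hz1, hz2⟩ := KLfull hvj hvi1 heq
    -- it suffices to show pr x ∣ pr u
    have key : ∀ w : Word n, pr n u = pr n (if j = i - 2 then
          (sigma n (i - 1) * sigma n i) * (sigma n (i - 2) * sigma n (i - 1))
          else if j = i - 1 then sigma n i
          else if j = i + 1 then sigma n (i - 1) * sigma n i * sigma n (i + 1)
          else sigma n (i - 1) * sigma n i) * pr n w →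
        ldvd n (pr n (sigma n j) * pr n (if j = i - 2 then
          (sigma n (i - 1) * sigma n i) * (sigma n (i - 2) * sigma n (i - 1))
          else if j = i - 1 then sigma n i
          else if j = i + 1 then sigma n (i - 1) * sigma n i * sigma n (i + 1)
          else sigma n (i - 1) * sigma n i)) e := by
      intro w hw
      refine ⟨pr n w, ?_⟩
      rw [mul_assoc, ← hw, hc₁]
    by_cases h2 : j = i - 2
    · have h3i : 3 ≤ i := by omega
      have hvi2 : Vld n (i - 2) := ⟨by omega, by omega⟩
      rw [h2, comp_adj (by omega : (i - 2) + 1 = i - 1 ∨ (i - 1) + 1 = i - 2)] at hz1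
      rw [h2, comp_adj (by omega : (i - 1) + 1 = i - 2 ∨ (i - 2) + 1 = i - 1)] at hz2
      -- hz2 : pr (σ_i * v) = prW [i-2, i-1] * pr z
      have heq2 : pr n (sigma n i * v) = pr n (sigma n (i - 2) * (sigma n (i - 1) * z)) := by
        rw [hz2, pr_cons, pr_cons]
        simp [prW_cons, prW_nil, mul_assoc]
      obtain ⟨z₂, hz₂1, hz₂2⟩ := KLfull hvi hvi2 heq2
      rw [comp_far (by omega : (i - 2) + 2 ≤ i ∨ i + 2 ≤ i - 2)] at hz₂2
      -- hz₂2 : pr (σ_{i-1} * z) = prW [i] * pr z₂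
      have heq3 : pr n (sigma n (i - 1) * z) = pr n (sigma n i * z₂) := by
        rw [hz₂2, prW_single, pr_cons]
      obtain ⟨z₃, hz₃1, hz₃2⟩ := KLfull hvi1 hvi heq3
      rw [comp_adj (by omega : (i - 1) + 1 = i ∨ i + 1 = i - 1)] at hz₃1
      -- hz₃1 : pr z = prW [i, i-1] * pr z₃
      apply key z₃
      rw [if_pos h2]
      calc pr n u = prW n [i - 1, i - 2] * pr n z := hz1
        _ = prW n [i - 1, i - 2] * (prW n [i, i - 1] * pr n z₃) := by rw [hz₃1]
        _ = prW n [i - 1, i - 2, i, i - 1] * pr n z₃ := by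
            rw [prW_prW]; simp only [List.cons_append, List.nil_append]
        _ = prW n [i - 1, i, i - 2, i - 1] * pr n z₃ := by
            have h' := prW_swap n [i - 1] [i - 1] hvi2 hvi (by omega)
            simp only [List.cons_append, List.nil_append] at h'
            rw [h']
        _ = pr n ((sigma n (i - 1) * sigma n i) * (sigma n (i - 2) * sigma n (i - 1))) *
              pr n z₃ := by
            simp [pr_mul, prW_cons, prW_nil, sq, mul_assoc]
    · by_cases h3 : j = i - 1
      · rw [h3, comp_self, prW_nil, one_mul] at hz1 hz2
        apply key v
        rw [if_neg h2, if_pos h3]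
        rw [hz1, ← hz2, pr_mul]
      · by_cases h4 : j = i + 1
        · have hvip : Vld n (i + 1) := ⟨by omega, by omega⟩
          rw [h4, comp_far (by omega : (i + 1) + 2 ≤ i - 1 ∨ (i - 1) + 2 ≤ i + 1)] at hz1
          rw [h4, comp_far (by omega : (i - 1) + 2 ≤ i + 1 ∨ (i + 1) + 2 ≤ i - 1)] at hz2
          -- hz2 : pr (σ_i * v) = prW [i+1] * pr z
          have heq2 : pr n (sigma n i * v) = pr n (sigma n (i + 1) * z) := by
            rw [hz2, prW_single, pr_cons]
          obtain ⟨z₂, hz₂1, hz₂2⟩ := KLfull hvi hvip heq2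
          rw [comp_adj (by omega : (i + 1) + 1 = i ∨ i + 1 = i + 1)] at hz₂2
          -- hz₂2 : pr z = prW [i, i+1] * pr z₂
          apply key z₂
          rw [if_neg h2, if_neg h3, if_pos h4]
          calc pr n u = prW n [i - 1] * pr n z := hz1
            _ = prW n [i - 1] * (prW n [i, i + 1] * pr n z₂) := by rw [hz₂2]
            _ = prW n [i - 1, i, i + 1] * pr n z₂ := by
                rw [prW_prW]; simp only [List.cons_append, List.nil_append]
            _ = pr n (sigma n (i - 1) * sigma n i * sigma n (i + 1)) * pr n z₂ := by
                simp [pr_mul, prW_cons, prW_nil, sq, mul_assoc]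
        · by_cases h5 : j = i
          · rw [h5, comp_adj (by omega : i + 1 = i - 1 ∨ (i - 1) + 1 = i)] at hz1
            -- hz1 : pr u = prW [i-1, i] * pr z
            apply key z
            rw [if_neg h2, if_neg h3, if_neg h4]
            rw [hz1, hx2]
          · -- far from both
            rw [comp_far (by omega : j + 2 ≤ i - 1 ∨ (i - 1) + 2 ≤ j)] at hz1
            rw [comp_far (by omega : (i - 1) + 2 ≤ j ∨ j + 2 ≤ i - 1)] at hz2
            have heq2 : pr n (sigma n i * v) = pr n (sigma n j * z) := by
              rw [hz2, prW_single, pr_cons]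
            obtain ⟨z₂, hz₂1, hz₂2⟩ := KLfull hvi hvj heq2
            rw [comp_far (by omega : j + 2 ≤ i ∨ i + 2 ≤ j)] at hz₂2
            apply key z₂
            rw [if_neg h2, if_neg h3, if_neg h4]
            calc pr n u = prW n [i - 1] * pr n z := hz1
              _ = prW n [i - 1] * (prW n [i] * pr n z₂) := by rw [hz₂2]
              _ = prW n [i - 1, i] * pr n z₂ := by
                  rw [prW_prW]; simp only [List.cons_append, List.nil_append]
              _ = pr n (sigma n (i - 1) * sigma n i) * pr n z₂ := by rw [hx2]

end BraidPaper
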